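/- Let G be a finite p-group with an abelian maximal subgroup A (index p) and |G| ≥ p⁴, and suppose G is of maximal class (nilpotency class |G| has order pⁿ and class n−1, so |Z(G)| = p). Then CD(G) = {A}. -/

import Mathlib

noncomputable def mCD {G : Type*} [Group G] (H : Subgroup G) : ℕ :=
  Nat.card H * Nat.card (Subgroup.centralizer (H : Set G))

noncomputable def mStar (G : Type*) [Group G] : ℕ :=
  sSup (Set.range fun H : Subgroup G => mCD H)

noncomputable def CD (G : Type*) [Group G] : Set (Subgroup G) :=
  {H | mCD H = mStar G}

noncomputable def deltaCD (G : Type*) [Group G] : ℕ :=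
  Nat.card {H : Subgroup G // H ∉ CD G}

theorem stmt12 {p n : ℕ} [Fact p.Prime] {G : Type*} [Group G] [Finite G]
    [Group.IsNilpotent G] (hG : IsPGroup p G) (A : Subgroup G)
    (hA : ∀ x y : A, x * y = y * x) (hidx : A.index = p)
    (hcard : Nat.card G = p ^ n) (hn : 4 ≤ n)
    (hclass : Group.nilpotencyClass G = n - 1) :
    CD G = {A} := by
  have hp : p.Prime := Fact.out
  have hp1 : 1 < p := hp.one_lt
  have hp0 : 0 < p := hp.pos
  -- all subgroups have p-power order
  have pcard : ∀ H : Subgroup G, ∃ k ≤ n, Nat.card H = p ^ k := by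
    intro H
    have hHp := hG.to_subgroup H
    rw [IsPGroup.iff_card] at hHp
    obtain ⟨k, hk⟩ := hHp
    refine ⟨k, ?_, hk⟩
    have : (p : ℕ) ^ k ∣ p ^ n := by
      rw [← hk, ← hcard]; exact Subgroup.card_subgroup_dvd_card H
    exact (Nat.pow_dvd_pow_iff_le_right hp1).mp this
  -- card of A
  have cardA : Nat.card A = p ^ (n - 1) := by
    have h1 : A.index * Nat.card A = Nat.card G := Subgroup.index_mul_card A
    rw [hidx, hcard] at h1
    have h2 : p ^ n = p * p ^ (n - 1) := by
      rw [← pow_succ']; congr 1; omega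
    rw [h2] at h1
    exact Nat.eq_of_mul_eq_mul_left hp0 h1
  -- maximality of A
  have hmax : ∀ K : Subgroup G, A ≤ K → K = A ∨ K = ⊤ := by
    intro K hAK
    have h1 : A.relIndex K * K.index = p := by
      rw [Subgroup.relIndex_mul_index hAK, hidx]
    rcases (Nat.Prime.eq_one_or_self_of_dvd hp _ ⟨K.index, h1.symm⟩) with h2 | h2
    · left
      exact le_antisymm (Subgroup.relIndex_eq_one.mp h2) hAK
    · right
      rw [h2] at h1
      have : K.index = 1 := by
        have := Nat.eq_of_mul_eq_mul_left hp0 (by linarith [h1] : p * K.index = p * 1)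
        exact this
      exact Subgroup.index_eq_one.mp this
  have hAne : A ≠ ⊤ := by
    intro h
    rw [h, Subgroup.index_top] at hidx
    omega
  -- bound on the center
  have hZ : Nat.card (Subgroup.center G) ≤ p ^ (n - 3) := by
    set Z := Subgroup.center G with hZdef
    have hQp : IsPGroup p (G ⧸ Z) := hG.to_quotient Z
    obtain ⟨m, hm⟩ := IsPGroup.iff_card.mp hQp
    have hclQ : Group.nilpotencyClass (G ⧸ Z) = n - 2 := by
      rw [nilpotencyClass_quotient_center, hclass]; omega
    have hm3 : 3 ≤ m := by
      by_contra hlt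
      push_neg at hlt
      have hcomm : ∀ a b : G ⧸ Z, a * b = b * a := by
        interval_cases m
        · have : Nat.card (G ⧸ Z) = 1 := by simpa using hm
          have : Subsingleton (G ⧸ Z) := Nat.card_eq_one_iff_unique.mp this |>.1
          intro a b; exact Subsingleton.elim _ _
        · have : Nat.card (G ⧸ Z) = p := by simpa using hm
          have hcyc : IsCyclic (G ⧸ Z) := isCyclic_of_prime_card this
          letI := hcyc.commGroup
          intro a b; exact mul_comm a b
        · exact IsPGroup.commutative_of_card_eq_prime_sq hm
      letI : CommGroup (G ⧸ Z) := { (inferInstance : Group (G ⧸ Z)) with mul_comm := hcomm }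
      have := CommGroup.nilpotencyClass_le_one (G := G ⧸ Z)
      omega
    have hZQ : Nat.card Z * p ^ m = p ^ n := by
      rw [← hm, ← hcard, ← Subgroup.index_eq_card, Subgroup.card_mul_index]
    have h3 : Nat.card Z * p ^ 3 ≤ p ^ (n - 3) * p ^ 3 := by
      calc Nat.card Z * p ^ 3 ≤ Nat.card Z * p ^ m :=
            Nat.mul_le_mul_left _ (Nat.pow_le_pow_right hp0 hm3)
        _ = p ^ n := hZQ
        _ = p ^ (n - 3) * p ^ 3 := by rw [← pow_add]; congr 1; omega
    exact Nat.le_of_mul_le_mul_right h3 (pow_pos hp0 3)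
  have hZpos : 0 < Nat.card (Subgroup.center G) := Nat.card_pos
  -- A is self-centralizing
  have hAC : A ≤ Subgroup.centralizer (A : Set G) := by
    intro a ha
    rw [Subgroup.mem_centralizer_iff]
    intro h hh
    have := hA ⟨h, hh⟩ ⟨a, ha⟩
    exact congrArg Subtype.val this
  have hcentA : Subgroup.centralizer (A : Set G) = A := by
    rcases hmax _ hAC with h | h
    · exact h
    · exfalso
      have hsub : A ≤ Subgroup.center G := by
        intro a ha
        rw [Subgroup.mem_center_iff]
        intro g
        have hg : g ∈ Subgroup.centralizer (A : Set G) := h ▸ Subgroup.mem_top g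
        exact (Subgroup.mem_centralizer_iff.mp hg a ha).symm
      have := Nat.le_of_dvd hZpos (Subgroup.card_dvd_of_le hsub)
      rw [cardA] at this
      have : p ^ (n - 1) ≤ p ^ (n - 3) := le_trans this hZ
      have := (Nat.pow_le_pow_iff_right hp1).mp this
      omega
  -- centralizer of an element outside A is small
  have hCg : ∀ g : G, g ∉ A → Nat.card (Subgroup.centralizer ({g} : Set G)) ≤ p ^ (n - 2) := by
    intro g hg
    set C := Subgroup.centralizer ({g} : Set G) with hCdef
    have hinf : A ⊓ C ≤ Subgroup.center G := by
      rintro a ⟨haA, haC⟩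
      have hga : g * a = a * g := Subgroup.mem_centralizer_iff.mp haC g rfl
      have htop : A ⊔ Subgroup.zpowers g = ⊤ := by
        rcases hmax _ le_sup_left with h | h
        · exfalso
          exact hg (h ▸ Subgroup.mem_sup_right (Subgroup.mem_zpowers g))
        · exact h
      have hca : Subgroup.centralizer ({a} : Set G) = ⊤ := by
        rw [eq_top_iff, ← htop]
        refine sup_le ?_ ?_
        · intro x hx
          rw [Subgroup.mem_centralizer_iff]
          intro y hy
          rw [show y = a from hy]
          exact congrArg Subtype.val (hA ⟨a, haA⟩ ⟨x, hx⟩)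
        · rw [Subgroup.zpowers_le, Subgroup.mem_centralizer_iff]
          intro y hy
          rw [show y = a from hy]
          exact hga.symm
      rw [Subgroup.mem_center_iff]
      intro x
      have hx : x ∈ Subgroup.centralizer ({a} : Set G) := hca ▸ Subgroup.mem_top x
      exact (Subgroup.mem_centralizer_iff.mp hx a rfl).symm
    have hrel : A.relIndex C ≤ p := by
      have hne : A.relIndex ⊤ ≠ 0 := by
        rw [Subgroup.relIndex_top_right, hidx]; omega
      have := Subgroup.relIndex_le_of_le_right (le_top : C ≤ ⊤) hne
      rwa [Subgroup.relIndex_top_right, hidx] at this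
    have hcardsub : Nat.card (A.subgroupOf C) = Nat.card (A ⊓ C : Subgroup G) := by
      rw [← Subgroup.inf_subgroupOf_right]
      exact Nat.card_congr (Subgroup.subgroupOfEquivOfLe inf_le_right).toEquiv
    have h1 : (A.subgroupOf C).index * Nat.card (A.subgroupOf C) = Nat.card C :=
      Subgroup.index_mul_card _
    have h2 : Nat.card (A ⊓ C : Subgroup G) ≤ p ^ (n - 3) :=
      le_trans (Nat.le_of_dvd hZpos (Subgroup.card_dvd_of_le hinf)) hZ
    calc Nat.card C = (A.subgroupOf C).index * Nat.card (A.subgroupOf C) := h1.symm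
      _ = A.relIndex C * Nat.card (A ⊓ C : Subgroup G) := by rw [hcardsub]; rfl
      _ ≤ p * p ^ (n - 3) := Nat.mul_le_mul hrel h2
      _ = p ^ (n - 2) := by rw [← pow_succ']; congr 1; omega
  -- the main bound for H ≠ A
  have hbound : ∀ H : Subgroup G, H ≠ A → mCD H ≤ p ^ (n - 2) * p ^ (n - 1) := by
    intro H hne
    by_cases htop : H = ⊤
    · subst htop
      have : mCD (⊤ : Subgroup G) = Nat.card G * Nat.card (Subgroup.center G) := by
        rw [mCD, Subgroup.coe_top, Subgroup.centralizer_univ]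
        congr 1
        exact Nat.card_congr Subgroup.topEquiv.toEquiv
      rw [this, hcard]
      calc p ^ n * Nat.card (Subgroup.center G) ≤ p ^ n * p ^ (n - 3) :=
            Nat.mul_le_mul_left _ hZ
        _ ≤ p ^ (n - 2) * p ^ (n - 1) := by
            rw [← pow_add, ← pow_add]
            exact Nat.pow_le_pow_right hp0 (by omega)
    by_cases hHA : H ≤ A
    · -- H < A
      have hAcent : A ≤ Subgroup.centralizer (H : Set G) :=
        le_trans hAC (Subgroup.centralizer_le (by exact_mod_cast hHA))
      rcases hmax _ hAcent with h | h
      · -- centralizer H = A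
        obtain ⟨k, hkn, hk⟩ := pcard H
        have hkdvd : (p : ℕ) ^ k ∣ p ^ (n - 1) := by
          rw [← hk, ← cardA]; exact Subgroup.card_dvd_of_le hHA
        have hk1 : k ≤ n - 1 := (Nat.pow_dvd_pow_iff_le_right hp1).mp hkdvd
        have hkne : k ≠ n - 1 := by
          intro hkeq
          apply hne
          apply Subgroup.eq_of_le_of_card_ge hHA
          rw [cardA, hk, hkeq]
        have hHle : Nat.card H ≤ p ^ (n - 2) := by
          rw [hk]; exact Nat.pow_le_pow_right hp0 (by omega)
        rw [mCD, h, cardA]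
        exact Nat.mul_le_mul_right _ hHle
      · -- centralizer H = ⊤ : H ≤ center
        have hsub : H ≤ Subgroup.center G := by
          intro a ha
          rw [Subgroup.mem_center_iff]
          intro x
          have hx : x ∈ Subgroup.centralizer (H : Set G) := h ▸ Subgroup.mem_top x
          exact (Subgroup.mem_centralizer_iff.mp hx a ha).symm
        have hHle : Nat.card H ≤ p ^ (n - 3) :=
          le_trans (Nat.le_of_dvd hZpos (Subgroup.card_dvd_of_le hsub)) hZ
        have hCle : Nat.card (Subgroup.centralizer (H : Set G)) ≤ p ^ n := by
          obtain ⟨k, hkn, hk⟩ := pcard (Subgroup.centralizer (H : Set G))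
          rw [hk]; exact Nat.pow_le_pow_right hp0 hkn
        calc mCD H ≤ p ^ (n - 3) * p ^ n := Nat.mul_le_mul hHle hCle
          _ ≤ p ^ (n - 2) * p ^ (n - 1) := by
            rw [← pow_add, ← pow_add]
            exact Nat.pow_le_pow_right hp0 (by omega)
    · -- H not contained in A
      obtain ⟨g, hgH, hgA⟩ := SetLike.not_le_iff_exists.mp hHA
      have hCle : Nat.card (Subgroup.centralizer (H : Set G)) ≤ p ^ (n - 2) := by
        refine le_trans (Nat.le_of_dvd ?_ (Subgroup.card_dvd_of_le
          (Subgroup.centralizer_le (Set.singleton_subset_iff.mpr hgH)))) (hCg g hgA)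
        exact Nat.card_pos
      have hHle : Nat.card H ≤ p ^ (n - 1) := by
        obtain ⟨k, hkn, hk⟩ := pcard H
        have hkne : k ≠ n := by
          intro hkeq
          apply htop
          apply Subgroup.eq_top_of_card_eq
          rw [hk, hkeq, hcard]
        rw [hk]
        exact Nat.pow_le_pow_right hp0 (by omega)
      calc mCD H ≤ p ^ (n - 1) * p ^ (n - 2) := Nat.mul_le_mul hHle hCle
        _ = p ^ (n - 2) * p ^ (n - 1) := Nat.mul_comm _ _
  -- value at A
  have hmA : mCD A = p ^ (n - 1) * p ^ (n - 1) := by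
    rw [mCD, hcentA, cardA]
  have hstrict : p ^ (n - 2) * p ^ (n - 1) < p ^ (n - 1) * p ^ (n - 1) := by
    exact Nat.mul_lt_mul_of_lt_of_le (Nat.pow_lt_pow_right hp1 (by omega)) (le_refl _)
      (pow_pos hp0 _)
  -- mStar = mCD A
  have hub : ∀ H : Subgroup G, mCD H ≤ mCD A := by
    intro H
    by_cases h : H = A
    · subst h; exact le_refl _
    · rw [hmA]; exact le_trans (hbound H h) (le_of_lt hstrict)
  have hstar : mStar G = mCD A := by
    apply IsGreatest.csSup_eq
    constructor
    · exact ⟨A, rfl⟩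
    · rintro x ⟨H, rfl⟩
      exact hub H
  ext H
  simp only [CD, Set.mem_setOf_eq, Set.mem_singleton_iff, hstar]
  constructor
  · intro h
    by_contra hne
    have := hbound H hne
    rw [h, hmA] at this
    omega
  · rintro rfl; rfl
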